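/- Let n ≥ 1, let V be the free real vector space with basis vectors e₁, …, eₙ, f₁, …, fₙ (i.e. V = (Fin n ⊕ Fin n) → ℝ with its standard basis), and work in the exterior algebra Λ(V) over ℝ. Let σ_s := Σᵢ eᵢ ∧ fᵢ, and let β := Σ_{i<j} b_{ij} eᵢ ∧ eⱼ for arbitrary real coefficients b_{ij}. Then (σ_s + β)ⁿ = σ_sⁿ in Λ(V). -/

import Mathlib

open ExteriorAlgebra

section Aux

variable {R : Type*} [CommRing R] {M : Type*} [AddCommGroup M] [Module R M]

theorem aux_prod_map_ι_eq_zero_of_not_nodup (l : List M) (h : ¬ l.Nodup) :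
    (l.map (ι R)).prod = 0 := by
  rw [List.nodup_iff_injective_get, Function.Injective] at h
  push_neg at h
  obtain ⟨i, j, hij, hne⟩ := h
  have key : (l.map (ι R)).prod = ιMulti R l.length l.get := by
    rw [ιMulti_apply]
    conv_lhs => rw [← List.ofFn_get l, List.map_ofFn]
    rfl
  rw [key]
  exact AlternatingMap.map_eq_zero_of_eq _ _ hij hne

theorem aux_sum_smul_pow_expand {A ι' : Type*} [Ring A] [Algebra ℝ A] [Fintype ι']
    (r : ι' → ℝ) (a : ι' → A) (m : ℕ) :
    (∑ i, r i • a i) ^ m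
      = ∑ g : Fin m → ι', (∏ j, r (g j)) • (List.ofFn fun j => a (g j)).prod := by
  induction m with
  | zero => simp
  | succ m ih =>
    rw [pow_succ', ih, Finset.mul_sum]
    rw [← Equiv.sum_comp (Fin.consEquiv fun _ : Fin (m + 1) => ι')
      (fun g : Fin (m + 1) → ι' => (∏ j, r (g j)) • (List.ofFn fun j => a (g j)).prod)]
    rw [Fintype.sum_prod_type, Finset.sum_comm]
    refine Finset.sum_congr rfl fun g _ => ?_
    rw [Finset.sum_mul]
    refine Finset.sum_congr rfl fun i _ => ?_
    simp only [Fin.consEquiv_apply, Fin.prod_univ_succ, Fin.cons_zero, Fin.cons_succ,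
      List.ofFn_succ, List.prod_cons, smul_mul_smul_comm]

theorem aux_prod_pairs (m : ℕ) (x y : Fin m → M) :
    (List.ofFn fun j => ι R (x j) * ι R (y j)).prod
      = (((List.ofFn fun j => [x j, y j]).flatten).map (ι R)).prod := by
  induction m with
  | zero => simp
  | succ m ih =>
    simp only [List.ofFn_succ, List.prod_cons, List.flatten_cons, List.map_append,
      List.prod_append, List.map_cons, List.map_nil, List.prod_nil, List.prod_cons]
    rw [ih (fun j => x j.succ) (fun j => y j.succ)]
    rw [mul_one, mul_assoc]

variable [DecidableEq M]

theorem aux_sum_count_pair {N : ℕ} (E : Fin N → M) (hE : Function.Injective E)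
    (c d : M) (i0 : Fin N) (hc : c = E i0) (hd : ∀ i, d ≠ E i) :
    ∑ i, ([c, d] : List M).count (E i) = 1 := by
  subst hc
  have key : ∀ i : Fin N, ([E i0, d] : List M).count (E i) = if i = i0 then 1 else 0 := by
    intro i
    simp only [List.count_cons, List.count_nil, beq_iff_eq]
    rcases eq_or_ne i i0 with rfl | h
    · simp [hd i]
    · simp [hd i, hE.eq_iff, Ne.symm h, h]
  rw [Finset.sum_congr rfl fun i _ => key i]
  simp

theorem aux_sum_count_pair2 {N : ℕ} (E : Fin N → M) (hE : Function.Injective E)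
    (c d : M) (i0 j0 : Fin N) (hc : c = E i0) (hd : d = E j0) :
    ∑ i, ([c, d] : List M).count (E i) = 2 := by
  subst hc; subst hd
  rcases eq_or_ne i0 j0 with rfl | hne
  · have key : ∀ i : Fin N, ([E i0, E i0] : List M).count (E i) = if i = i0 then 2 else 0 := by
      intro i
      simp only [List.count_cons, List.count_nil, beq_iff_eq]
      rcases eq_or_ne i i0 with rfl | h
      · simp
      · simp [hE.eq_iff, Ne.symm h, h]
    rw [Finset.sum_congr rfl fun i _ => key i]
    simp
  · have key : ∀ i : Fin N, ([E i0, E j0] : List M).count (E i)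
        = (if i = i0 then 1 else 0) + (if i = j0 then 1 else 0) := by
      intro i
      simp only [List.count_cons, List.count_nil, beq_iff_eq]
      rcases eq_or_ne i i0 with rfl | h1 <;> rcases eq_or_ne i j0 with rfl | h2 <;>
        simp_all [hE.eq_iff, eq_comm]
    rw [Finset.sum_congr rfl fun i _ => key i]
    simp [Finset.sum_add_distrib]

theorem aux_sum_count_flatten {N : ℕ} (E : Fin N → M) (hE : Function.Injective E)
    (m : ℕ) (x y : Fin m → M) (hx : ∀ j, ∃ i, x j = E i) (hy : ∀ j i, y j ≠ E i) :
    ∑ i, ((List.ofFn fun j => [x j, y j]).flatten).count (E i) = m := by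
  induction m with
  | zero => simp
  | succ m ih =>
    simp only [List.ofFn_succ, List.flatten_cons, List.count_append]
    rw [Finset.sum_add_distrib]
    obtain ⟨i0, hi0⟩ := hx 0
    rw [aux_sum_count_pair E hE _ _ i0 hi0 (hy 0),
      ih (fun j => x j.succ) (fun j => y j.succ) (fun j => hx j.succ) (fun j => hy j.succ)]
    omega

theorem aux_sum_count_flatten2 {N : ℕ} (E : Fin N → M) (hE : Function.Injective E)
    (m : ℕ) (x y : Fin m → M) (hx : ∀ j, ∃ i, x j = E i) (hy : ∀ j, ∃ i, y j = E i) :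
    ∑ i, ((List.ofFn fun j => [x j, y j]).flatten).count (E i) = 2 * m := by
  induction m with
  | zero => simp
  | succ m ih =>
    simp only [List.ofFn_succ, List.flatten_cons, List.count_append]
    rw [Finset.sum_add_distrib]
    obtain ⟨i0, hi0⟩ := hx 0
    obtain ⟨j0, hj0⟩ := hy 0
    rw [aux_sum_count_pair2 E hE _ _ i0 j0 hi0 hj0,
      ih (fun j => x j.succ) (fun j => y j.succ) (fun j => hx j.succ) (fun j => hy j.succ)]
    omega

theorem aux_zero {N : ℕ} (E : Fin N → M) (L : List M)
    (hcount : N < ∑ i, L.count (E i)) : (L.map (ι R)).prod = 0 := by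
  apply aux_prod_map_ι_eq_zero_of_not_nodup
  intro hnd
  have hle : ∑ i, L.count (E i) ≤ ∑ _i : Fin N, 1 :=
    Finset.sum_le_sum fun i _ => List.nodup_iff_count_le_one.1 hnd (E i)
  simp only [Finset.sum_const, Finset.card_univ, Fintype.card_fin, smul_eq_mul, mul_one] at hle
  omega

end Aux

theorem statement12 (n : ℕ) (hn : 1 ≤ n) (b : Fin n → Fin n → ℝ) :
    let V := (Fin n ⊕ Fin n) → ℝ
    let e : Fin n → ExteriorAlgebra ℝ V :=
      fun i => ExteriorAlgebra.ι ℝ (Pi.single (Sum.inl i) (1 : ℝ))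
    let f : Fin n → ExteriorAlgebra ℝ V :=
      fun i => ExteriorAlgebra.ι ℝ (Pi.single (Sum.inr i) (1 : ℝ))
    let σs : ExteriorAlgebra ℝ V := ∑ i, e i * f i
    let β : ExteriorAlgebra ℝ V :=
      ∑ p ∈ Finset.univ.filter (fun p : Fin n × Fin n => p.1 < p.2),
        b p.1 p.2 • (e p.1 * e p.2)
    (σs + β) ^ n = σs ^ n := by
  intro V e f σs β
  classical
  set E : Fin n → V := fun i => Pi.single (Sum.inl i) (1 : ℝ) with hEdef
  set F : Fin n → V := fun i => Pi.single (Sum.inr i) (1 : ℝ) with hFdef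
  have hE : Function.Injective E := by
    intro i j h
    by_contra hne
    have h2 := congrFun h (Sum.inl i)
    simp [hEdef, Pi.single_apply, hne] at h2
  have hFE : ∀ j i, F j ≠ E i := by
    intro j i h
    have h2 := congrFun h (Sum.inr j)
    simp [hEdef, hFdef, Pi.single_apply] at h2
  have swap : ∀ x y : V, ι ℝ x * ι ℝ y = -(ι ℝ y * ι ℝ x) := fun x y =>
    eq_neg_of_add_eq_zero_left (ι_add_mul_swap x y)
  have hc1 : ∀ x y z : V, Commute (ι ℝ x * ι ℝ y) (ι ℝ z) := by
    intro x y z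
    show (ι ℝ x * ι ℝ y) * ι ℝ z = ι ℝ z * (ι ℝ x * ι ℝ y)
    rw [mul_assoc, swap y z, mul_neg, ← mul_assoc, swap x z, neg_mul, neg_neg, mul_assoc]
  have hc2 : ∀ x y z w : V, Commute (ι ℝ x * ι ℝ y) (ι ℝ z * ι ℝ w) :=
    fun x y z w => (hc1 x y z).mul_right (hc1 x y w)
  have hσβ : Commute σs β := by
    refine Commute.sum_left _ _ _ fun i _ => Commute.sum_right _ _ _ fun p _ => ?_
    exact ((hc2 (E i) (F i) (E p.1) (E p.2)).smul_right _).symm.symm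
  have hzero : ∀ p q : ℕ, n < p + 2 * q → σs ^ p * β ^ q = 0 := by
    intro p q hpq
    have hσs' : σs = ∑ i : Fin n, (1 : ℝ) • (ι ℝ (E i) * ι ℝ (F i)) := by
      simp only [one_smul]
      rfl
    have hβ' : β = ∑ pr : Fin n × Fin n,
        (if pr.1 < pr.2 then b pr.1 pr.2 else 0) • (ι ℝ (E pr.1) * ι ℝ (E pr.2)) := by
      show (∑ pr ∈ Finset.univ.filter (fun pr : Fin n × Fin n => pr.1 < pr.2),
          b pr.1 pr.2 • (ι ℝ (E pr.1) * ι ℝ (E pr.2))) = _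
      rw [Finset.sum_filter]
      refine Finset.sum_congr rfl fun pr _ => ?_
      split <;> simp
    rw [hσs', hβ', aux_sum_smul_pow_expand, aux_sum_smul_pow_expand, Finset.sum_mul_sum]
    refine Finset.sum_eq_zero fun g _ => Finset.sum_eq_zero fun h _ => ?_
    rw [smul_mul_smul_comm]
    convert smul_zero _
    rw [aux_prod_pairs, aux_prod_pairs, ← List.prod_append, ← List.map_append]
    apply aux_zero E
    simp only [List.count_append]
    rw [Finset.sum_add_distrib,
      aux_sum_count_flatten E hE p (fun j => E (g j)) (fun j => F (g j))
        (fun j => ⟨g j, rfl⟩) (fun j i => hFE (g j) i),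
      aux_sum_count_flatten2 E hE q (fun j => E (h j).1) (fun j => E (h j).2)
        (fun j => ⟨(h j).1, rfl⟩) (fun j => ⟨(h j).2, rfl⟩)]
    omega
  rw [hσβ.add_pow, Finset.sum_range_succ]
  have hlast : σs ^ n * β ^ (n - n) * (n.choose n : ExteriorAlgebra ℝ V) = σs ^ n := by
    simp
  rw [hlast, Finset.sum_eq_zero, zero_add]
  intro k hk
  have hk' : k < n := Finset.mem_range.1 hk
  rw [hzero k (n - k) (by omega), zero_mul]
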